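/- Let f, g: ℝⁿ → ℝ ∪ {+∞} be convex lower semicontinuous proper functions with dom f ∩ dom g ≠ ∅ (and suitable qualification, e.g., one of them continuous at a common point of the domains). Then the convex conjugate of f + g equals the infimal convolution of the conjugates: (f + g)* = f* □ g*, where (f* □ g*)(x) := inf_y f*(x − y) + g*(y). -/

import Mathlib

open scoped BigOperators

set_option maxHeartbeats 1000000

section Aux

variable {n : ℕ}

local notation "E" => EuclideanSpace ℝ (Fin n)

/-- helper: a real number as EReal from a non-top non-bot EReal -/
lemma aux_real_cases (a : EReal) (h1 : a ≠ ⊥) (h2 : a ≠ ⊤) : ∃ r : ℝ, a = (r : EReal) :=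
  ⟨a.toReal, (EReal.coe_toReal h2 h1).symm⟩

end Aux

/-- Fenchel: for convex, lower semicontinuous, proper `f, g : ℝⁿ → ℝ ∪ {+∞}` with
overlapping domains and a qualification (continuity of `f` at a common domain point),
the conjugate of the sum is the infimal convolution of the conjugates. -/
theorem stmt_6 (n : ℕ)
    (f g : EuclideanSpace ℝ (Fin n) → EReal)
    -- properness: never -∞, not identically +∞
    (hfbot : ∀ x, f x ≠ ⊥) (hgbot : ∀ x, g x ≠ ⊥)
    (hfproper : ∃ x, f x ≠ ⊤) (hgproper : ∃ x, g x ≠ ⊤)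
    -- convexity
    (hfconv : ∀ x y : EuclideanSpace ℝ (Fin n), ∀ a b : ℝ, 0 ≤ a → 0 ≤ b → a + b = 1 →
      f (a • x + b • y) ≤ (a : EReal) * f x + (b : EReal) * f y)
    (hgconv : ∀ x y : EuclideanSpace ℝ (Fin n), ∀ a b : ℝ, 0 ≤ a → 0 ≤ b → a + b = 1 →
      g (a • x + b • y) ≤ (a : EReal) * g x + (b : EReal) * g y)
    -- lower semicontinuity
    (hflsc : LowerSemicontinuous f) (hglsc : LowerSemicontinuous g)
    -- domains overlap, with constraint qualification: f continuous at a common domain point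
    (x₀ : EuclideanSpace ℝ (Fin n)) (hx₀f : f x₀ ≠ ⊤) (hx₀g : g x₀ ≠ ⊤)
    (hqual : ContinuousAt f x₀)
    -- the convex conjugate
    (conj : (EuclideanSpace ℝ (Fin n) → EReal) → EuclideanSpace ℝ (Fin n) → EReal)
    (hconj : ∀ F x, conj F x = ⨆ y, (((inner ℝ x y : ℝ) : EReal) - F y)) :
    ∀ x, conj (fun y => f y + g y) x = ⨅ y, (conj f (x - y) + conj g y) := by
  intro x
  obtain ⟨f₀, hf₀⟩ := aux_real_cases (f x₀) (hfbot x₀) hx₀f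
  obtain ⟨g₀, hg₀⟩ := aux_real_cases (g x₀) (hgbot x₀) hx₀g
  apply le_antisymm
  · -- easy direction: conj (f+g) x ≤ inf-convolution
    rw [hconj]
    refine iSup_le fun z => le_iInf fun y => ?_
    by_cases hfz : f z = ⊤
    · have : f z + g z = ⊤ := by rw [hfz]; exact EReal.top_add_of_ne_bot (hgbot z)
      rw [this, EReal.sub_top]
      exact bot_le
    by_cases hgz : g z = ⊤
    · have : f z + g z = ⊤ := by rw [hgz]; exact EReal.add_top_of_ne_bot (hfbot z)
      rw [this, EReal.sub_top]
      exact bot_le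
    obtain ⟨fz, hfz'⟩ := aux_real_cases (f z) (hfbot z) hfz
    obtain ⟨gz, hgz'⟩ := aux_real_cases (g z) (hgbot z) hgz
    have h1 : (((inner ℝ (x - y) z : ℝ) : EReal) - f z) ≤ conj f (x - y) := by
      rw [hconj]; exact le_iSup (fun q => (((inner ℝ (x - y) q : ℝ) : EReal) - f q)) z
    have h2 : (((inner ℝ y z : ℝ) : EReal) - g z) ≤ conj g y := by
      rw [hconj]; exact le_iSup (fun q => (((inner ℝ y q : ℝ) : EReal) - g q)) z
    have hinner : (inner ℝ x z : ℝ) = (inner ℝ (x - y) z : ℝ) + (inner ℝ y z : ℝ) := by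
      rw [← inner_add_left, sub_add_cancel]
    calc ((inner ℝ x z : ℝ) : EReal) - (f z + g z)
        = (((inner ℝ (x - y) z : ℝ) : EReal) - f z) + (((inner ℝ y z : ℝ) : EReal) - g z) := by
          rw [hfz', hgz', hinner]; norm_cast; ring
      _ ≤ conj f (x - y) + conj g y := add_le_add h1 h2
  · -- hard direction
    set P := conj (fun y => f y + g y) x with hP
    by_cases hPtop : P = ⊤
    · rw [hPtop]; exact le_top
    have hPbot : P ≠ ⊥ := by
      have hle : (((inner ℝ x x₀ : ℝ) : EReal) - (f x₀ + g x₀)) ≤ P := by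
        rw [hP, hconj]; exact le_iSup (fun q => (((inner ℝ x q : ℝ) : EReal) - (f q + g q))) x₀
      intro hPb
      rw [hPb, le_bot_iff, hf₀, hg₀] at hle
      norm_cast at hle
    obtain ⟨r, hr⟩ := aux_real_cases P hPbot hPtop
    have hbound : ∀ z, (((inner ℝ x z : ℝ) : EReal) - (f z + g z)) ≤ (r : EReal) := by
      intro z; rw [← hr, hP, hconj]; exact le_iSup (fun q => (((inner ℝ x q : ℝ) : EReal) - (f q + g q))) z
    -- the two convex sets
    set C : Set (EuclideanSpace ℝ (Fin n) × ℝ) := {p | f p.1 < (p.2 : EReal)} with hCdef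
    set D : Set (EuclideanSpace ℝ (Fin n) × ℝ) :=
      {p | (p.2 : EReal) ≤ ((inner ℝ x p.1 : ℝ) : EReal) - (r : EReal) - g p.1} with hDdef
    -- disjointness of C and D
    have hCD : ∀ p, p ∈ C → p ∉ D := by
      rintro ⟨z, t⟩ hpc hpd
      simp only [hCdef, hDdef, Set.mem_setOf_eq] at hpc hpd
      have hfz : f z ≠ ⊤ := fun h => by simp [h] at hpc
      obtain ⟨fz, hfz'⟩ := aux_real_cases (f z) (hfbot z) hfz
      have hgz : g z ≠ ⊤ := by
        intro h
        rw [h] at hpd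
        have : ((inner ℝ x z : ℝ) : EReal) - (r : EReal) - ⊤ = ⊥ := by
          rw [← EReal.coe_sub, EReal.sub_top]
        rw [this, le_bot_iff] at hpd
        exact EReal.coe_ne_bot t hpd
      obtain ⟨gz, hgz'⟩ := aux_real_cases (g z) (hgbot z) hgz
      have hb := hbound z
      rw [hfz'] at hpc
      rw [hgz'] at hpd
      rw [hfz', hgz'] at hb
      rw [← EReal.coe_add, ← EReal.coe_sub] at hb
      rw [← EReal.coe_sub, ← EReal.coe_sub] at hpd
      rw [EReal.coe_lt_coe_iff] at hpc
      rw [EReal.coe_le_coe_iff] at hpd hb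
      linarith
    -- convexity of C
    have hCconv : Convex ℝ C := by
      rintro ⟨z1, t1⟩ hp ⟨z2, t2⟩ hq a b ha hb hab
      simp only [hCdef, Set.mem_setOf_eq] at hp hq ⊢
      have hfz1 : f z1 ≠ ⊤ := fun h => by simp [h] at hp
      have hfz2 : f z2 ≠ ⊤ := fun h => by simp [h] at hq
      obtain ⟨f1, hf1⟩ := aux_real_cases (f z1) (hfbot z1) hfz1
      obtain ⟨f2, hf2⟩ := aux_real_cases (f z2) (hfbot z2) hfz2
      rw [hf1] at hp; rw [hf2] at hq
      rw [EReal.coe_lt_coe_iff] at hp hq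
      have key := hfconv z1 z2 a b ha hb hab
      rw [hf1, hf2] at key
      have : ((a : EReal) * (f1 : EReal) + (b : EReal) * (f2 : EReal))
          = ((a * f1 + b * f2 : ℝ) : EReal) := by norm_cast
      rw [this] at key
      have hreal : a * f1 + b * f2 < a * t1 + b * t2 := by
        rcases eq_or_lt_of_le ha with rfl | ha'
        · have hb1 : b = 1 := by linarith
          rw [hb1]; simpa using hq
        · have h1 : a * f1 < a * t1 := by exact mul_lt_mul_of_pos_left hp ha'
          have h2 : b * f2 ≤ b * t2 := mul_le_mul_of_nonneg_left hq.le hb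
          linarith
      calc f (a • z1 + b • z2) ≤ ((a * f1 + b * f2 : ℝ) : EReal) := key
        _ < ((a * t1 + b * t2 : ℝ) : EReal) := by exact_mod_cast hreal
    -- convexity of D
    have hDconv : Convex ℝ D := by
      rintro ⟨z1, t1⟩ hp ⟨z2, t2⟩ hq a b ha hb hab
      simp only [hDdef, Set.mem_setOf_eq] at hp hq ⊢
      have hgz1 : g z1 ≠ ⊤ := by
        intro h; rw [h] at hp
        have : ((inner ℝ x z1 : ℝ) : EReal) - (r : EReal) - ⊤ = ⊥ := by
          rw [← EReal.coe_sub, EReal.sub_top]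
        rw [this, le_bot_iff] at hp; exact EReal.coe_ne_bot t1 hp
      have hgz2 : g z2 ≠ ⊤ := by
        intro h; rw [h] at hq
        have : ((inner ℝ x z2 : ℝ) : EReal) - (r : EReal) - ⊤ = ⊥ := by
          rw [← EReal.coe_sub, EReal.sub_top]
        rw [this, le_bot_iff] at hq; exact EReal.coe_ne_bot t2 hq
      obtain ⟨g1, hg1⟩ := aux_real_cases (g z1) (hgbot z1) hgz1
      obtain ⟨g2, hg2⟩ := aux_real_cases (g z2) (hgbot z2) hgz2
      rw [hg1] at hp; rw [hg2] at hq
      rw [← EReal.coe_sub, ← EReal.coe_sub, EReal.coe_le_coe_iff] at hp hq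
      have key := hgconv z1 z2 a b ha hb hab
      rw [hg1, hg2] at key
      have heq : ((a : EReal) * (g1 : EReal) + (b : EReal) * (g2 : EReal))
          = ((a * g1 + b * g2 : ℝ) : EReal) := by norm_cast
      rw [heq] at key
      have hinner : (inner ℝ x (a • z1 + b • z2) : ℝ)
          = a * (inner ℝ x z1 : ℝ) + b * (inner ℝ x z2 : ℝ) := by
        rw [inner_add_right, real_inner_smul_right, real_inner_smul_right]
      have hreal : a * t1 + b * t2
          ≤ (inner ℝ x (a • z1 + b • z2) : ℝ) - r - (a * g1 + b * g2) := by
        rw [hinner]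
        have h1 : a * t1 ≤ a * ((inner ℝ x z1 : ℝ) - r - g1) := mul_le_mul_of_nonneg_left hp ha
        have h2 : b * t2 ≤ b * ((inner ℝ x z2 : ℝ) - r - g2) := mul_le_mul_of_nonneg_left hq hb
        have : a * r + b * r = r := by rw [← add_mul, hab, one_mul]
        nlinarith
      calc ((a * t1 + b * t2 : ℝ) : EReal)
          ≤ (((inner ℝ x (a • z1 + b • z2) : ℝ) - r - (a * g1 + b * g2) : ℝ) : EReal) := by
            exact_mod_cast hreal
        _ ≤ ((inner ℝ x (a • z1 + b • z2) : ℝ) : EReal) - (r : EReal) - g (a • z1 + b • z2) := by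
            rw [EReal.coe_sub, EReal.coe_sub]
            exact EReal.sub_le_sub le_rfl key
    -- nonempty interior of C containing a vertical ray above x₀
    set M : ℝ := f₀ + 1 with hM
    have hflt : f x₀ < ((M : ℝ) : EReal) := by rw [hf₀, hM]; exact_mod_cast (by linarith : f₀ < f₀ + 1)
    obtain ⟨U, hUsub, hUopen, hUx₀⟩ :=
      eventually_nhds_iff.1 (hqual.eventually_lt_const hflt)
    have hVsub : U ×ˢ Set.Ioi M ⊆ C := by
      rintro ⟨z, t⟩ ⟨hz, ht⟩
      simp only [hCdef, Set.mem_setOf_eq]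
      exact lt_trans (hUsub z hz) (by exact_mod_cast ht)
    have hVopen : IsOpen (U ×ˢ Set.Ioi M) := hUopen.prod isOpen_Ioi
    have hVint : U ×ˢ Set.Ioi M ⊆ interior C := hVopen.subset_interior_iff.2 hVsub
    have ha₀ : ((x₀, M + 1) : EuclideanSpace ℝ (Fin n) × ℝ) ∈ interior C :=
      hVint ⟨hUx₀, by simp [Set.mem_Ioi]⟩
    -- separation
    have hdisj : Disjoint (interior C) D :=
      Set.disjoint_left.2 fun p hp hpD => hCD p (interior_subset hp) hpD
    obtain ⟨L, s, hL1, hL2⟩ :=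
      geometric_hahn_banach_open (hCconv.interior) isOpen_interior hDconv hdisj
    -- L on all of C
    have hL1' : ∀ q ∈ C, L q ≤ s := by
      intro q hq
      have hmem : ∀ θ : ℝ, 0 < θ → θ ≤ 1 →
          L ((1 - θ) • q + θ • ((x₀, M + 1) : EuclideanSpace ℝ (Fin n) × ℝ)) < s := by
        intro θ h1 h2
        exact hL1 _ (hCconv.combo_self_interior_mem_interior hq ha₀ (by linarith) h1 (by ring))
      have hcont : Continuous fun θ : ℝ =>
          L ((1 - θ) • q + θ • ((x₀, M + 1) : EuclideanSpace ℝ (Fin n) × ℝ)) := by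
        fun_prop
      have htend : Filter.Tendsto
          (fun θ : ℝ => L ((1 - θ) • q + θ • ((x₀, M + 1) : EuclideanSpace ℝ (Fin n) × ℝ)))
          (nhdsWithin (0:ℝ) (Set.Ioi (0:ℝ))) (nhds (L q)) := by
        have h0 : Filter.Tendsto
            (fun θ : ℝ => L ((1 - θ) • q + θ • ((x₀, M + 1) : EuclideanSpace ℝ (Fin n) × ℝ)))
            (nhdsWithin (0:ℝ) (Set.Ioi (0:ℝ)))
            (nhds (L ((1 - (0:ℝ)) • q + (0:ℝ) • ((x₀, M + 1) : EuclideanSpace ℝ (Fin n) × ℝ)))) :=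
          (hcont.tendsto 0).mono_left nhdsWithin_le_nhds
        simpa using h0
      refine le_of_tendsto htend ?_
      filter_upwards [Ioo_mem_nhdsGT_of_mem (by constructor <;> norm_num : (0:ℝ) ∈ Set.Ico 0 1)]
        with θ hθ
      exact (hmem θ hθ.1 hθ.2.le).le
    -- decompose L
    set ℓ : EuclideanSpace ℝ (Fin n) → ℝ := fun z => L (z, 0) with hℓ
    set c : ℝ := L (0, 1) with hc
    have hLsplit : ∀ (z : EuclideanSpace ℝ (Fin n)) (t : ℝ), L (z, t) = ℓ z + t * c := by
      intro z t
      have : ((z, t) : EuclideanSpace ℝ (Fin n) × ℝ)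
          = (z, 0) + t • ((0 : EuclideanSpace ℝ (Fin n)), (1 : ℝ)) := by
        simp [Prod.ext_iff]
      rw [this, map_add, map_smul]
      simp [hℓ, hc, smul_eq_mul]
    -- c < 0
    have hray : ∀ T : ℝ, M < T → ℓ x₀ + T * c < s := by
      intro T hT
      have : ((x₀, T) : EuclideanSpace ℝ (Fin n) × ℝ) ∈ interior C :=
        hVint ⟨hUx₀, hT⟩
      have := hL1 _ this
      rwa [hLsplit] at this
    set t₀ : ℝ := (inner ℝ x x₀ : ℝ) - r - g₀ with ht₀
    have hDx₀ : ((x₀, t₀) : EuclideanSpace ℝ (Fin n) × ℝ) ∈ D := by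
      simp only [hDdef, Set.mem_setOf_eq, hg₀, ht₀]
      rw [← EReal.coe_sub, ← EReal.coe_sub]
    have hDineq : s ≤ ℓ x₀ + t₀ * c := by
      have := hL2 _ hDx₀
      rwa [hLsplit] at this
    have hcneg : c < 0 := by
      by_contra hge
      push_neg at hge
      have h1 := hray (max (M + 1) (t₀ + 1)) (lt_of_lt_of_le (by linarith) (le_max_left _ _))
      have h2 : t₀ * c ≤ (max (M + 1) (t₀ + 1)) * c :=
        mul_le_mul_of_nonneg_right (le_trans (by linarith) (le_max_right _ _)) hge
      linarith
    -- the dual point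
    set ℓc : EuclideanSpace ℝ (Fin n) →L[ℝ] ℝ :=
      L.comp (ContinuousLinearMap.inl ℝ (EuclideanSpace ℝ (Fin n)) ℝ) with hℓc
    have hℓc_apply : ∀ z, ℓc z = ℓ z := fun z => rfl
    set w : EuclideanSpace ℝ (Fin n) :=
      (-c)⁻¹ • ((InnerProductSpace.toDual ℝ (EuclideanSpace ℝ (Fin n))).symm ℓc) with hw
    have hwz : ∀ z, (inner ℝ w z : ℝ) = (-c)⁻¹ * ℓ z := by
      intro z
      rw [hw, real_inner_smul_left]
      congr 1
      rw [← hℓc_apply]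
      exact InnerProductSpace.toDual_symm_apply
    set σ : ℝ := s / (-c) with hσ
    have hcpos : 0 < -c := by linarith
    -- f* bound
    have hfstar : conj f w ≤ (σ : EReal) := by
      rw [hconj]
      refine iSup_le fun z => ?_
      by_cases hfz : f z = ⊤
      · rw [hfz, EReal.sub_top]; exact bot_le
      obtain ⟨fz, hfz'⟩ := aux_real_cases (f z) (hfbot z) hfz
      rw [hfz', ← EReal.coe_sub, EReal.coe_le_coe_iff]
      have hkey : ℓ z + fz * c ≤ s := by
        have haux : ∀ ε : ℝ, 0 < ε → ℓ z + fz * c ≤ s + ε := ?_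
        · by_contra hlt
          push_neg at hlt
          have := haux ((ℓ z + fz * c - s) / 2) (by linarith)
          linarith
        intro ε hε
        have hmem : ((z, fz + ε / (-c)) : EuclideanSpace ℝ (Fin n) × ℝ) ∈ C := by
          simp only [hCdef, Set.mem_setOf_eq, hfz']
          exact_mod_cast (by nlinarith [div_pos hε hcpos] : fz < fz + ε / (-c))
        have := hL1' _ hmem
        rw [hLsplit] at this
        have hdiv : (ε / (-c)) * c = -ε := by field_simp [hcpos.ne', hcneg.ne]
        nlinarith [this]
      rw [hwz z, hσ]
      rw [le_div_iff₀ hcpos]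
      have hinv : (-c)⁻¹ * ℓ z * (-c) = ℓ z := by field_simp [hcneg.ne]
      nlinarith
    -- g* bound
    have hgstar : conj g (x - w) ≤ ((r - σ : ℝ) : EReal) := by
      rw [hconj]
      refine iSup_le fun z => ?_
      by_cases hgz : g z = ⊤
      · rw [hgz, EReal.sub_top]; exact bot_le
      obtain ⟨gz, hgz'⟩ := aux_real_cases (g z) (hgbot z) hgz
      rw [hgz', ← EReal.coe_sub, EReal.coe_le_coe_iff]
      have hmem : ((z, (inner ℝ x z : ℝ) - r - gz) : EuclideanSpace ℝ (Fin n) × ℝ) ∈ D := by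
        simp only [hDdef, Set.mem_setOf_eq, hgz']
        rw [← EReal.coe_sub, ← EReal.coe_sub]
      have hsle := hL2 _ hmem
      rw [hLsplit] at hsle
      have hinner : (inner ℝ (x - w) z : ℝ) = (inner ℝ x z : ℝ) - (inner ℝ w z : ℝ) :=
        inner_sub_left x w z
      rw [hinner, hwz z, hσ]
      rw [div_eq_mul_inv]
      have h1 : ((inner ℝ x z : ℝ) - r - gz) * (-c) ≤ (ℓ z - s) := by nlinarith
      have h2 : (inner ℝ x z : ℝ) - (-c)⁻¹ * ℓ z - gz ≤ r - s * (-c)⁻¹ := by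
        have h3 := mul_le_mul_of_nonneg_right h1 (le_of_lt (inv_pos.2 hcpos))
        have hcc : (-c) * (-c)⁻¹ = 1 := mul_inv_cancel₀ (ne_of_gt hcpos)
        have h4 : (inner ℝ x z : ℝ) - r - gz ≤ (ℓ z - s) * (-c)⁻¹ := by
          rwa [mul_assoc, hcc, mul_one] at h3
        have h5 : (ℓ z - s) * (-c)⁻¹ = (-c)⁻¹ * ℓ z - s * (-c)⁻¹ := by ring
        linarith
      linarith
    -- conclude
    calc ⨅ y, (conj f (x - y) + conj g y)
        ≤ conj f (x - (x - w)) + conj g (x - w) := iInf_le _ (x - w)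
      _ = conj f w + conj g (x - w) := by rw [sub_sub_cancel]
      _ ≤ (σ : EReal) + ((r - σ : ℝ) : EReal) := add_le_add hfstar hgstar
      _ = (r : EReal) := by norm_cast; ring
      _ = P := hr.symm
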